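/- Let p, q, r be distinct primes and n = pqr. Then the Randić index of the 3-dprime divisor function graph Γ₃ equals (23 + 12√7)/14, as a real number. -/

import Mathlib

/-- The `k`-dprime divisor function graph on the positive divisors of `n`:
two distinct divisors `u`, `v` are adjacent iff `u ∣ v` or `v ∣ u`. -/
def divisorGraph (n : ℕ) : SimpleGraph {d : ℕ // d ∈ n.divisors} where
  Adj u v := u ≠ v ∧ ((u : ℕ) ∣ (v : ℕ) ∨ (v : ℕ) ∣ (u : ℕ))
  symm := ⟨fun _ _ ⟨h, hd⟩ => ⟨h.symm, hd.symm⟩⟩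
  loopless := ⟨fun _ ⟨h, _⟩ => h rfl⟩

instance (n : ℕ) : DecidableRel (divisorGraph n).Adj :=
  fun u v => inferInstanceAs (Decidable (u ≠ v ∧ ((u : ℕ) ∣ (v : ℕ) ∨ (v : ℕ) ∣ (u : ℕ))))

set_option linter.unusedSectionVars false

section Aux

variable {p q r : ℕ} (hp : p.Prime) (hq : q.Prime) (hr : r.Prime)
    (hpq : p ≠ q) (hpr : p ≠ r) (hqr : q ≠ r)

include hp hq hr hpq hpr hqr in
lemma fact_n_le {u : ℕ} (hu : u ∣ p * q * r) (s : ℕ) : u.factorization s ≤ 1 := by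
  have hn0 : p * q * r ≠ 0 := by
    simp [hp.ne_zero, hq.ne_zero, hr.ne_zero]
  have hu0 : u ≠ 0 := ne_zero_of_dvd_ne_zero hn0 hu
  have h1 : u.factorization ≤ (p * q * r).factorization :=
    (Nat.factorization_le_iff_dvd hu0 hn0).mpr hu
  refine le_trans (h1 s) ?_
  rw [Nat.factorization_mul (Nat.mul_ne_zero hp.ne_zero hq.ne_zero) hr.ne_zero,
      Nat.factorization_mul hp.ne_zero hq.ne_zero,
      hp.factorization, hq.factorization, hr.factorization]
  simp only [Finsupp.add_apply, Finsupp.single_apply]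
  split_ifs with h1 h2 h3 h2 h3 h3 <;> omega

include hp hq hr hpq hpr hqr in
lemma dvd_char {u v : ℕ} (hu : u ∣ p * q * r) (hv : v ∣ p * q * r) :
    u ∣ v ↔ ((p ∣ u → p ∣ v) ∧ (q ∣ u → q ∣ v) ∧ (r ∣ u → r ∣ v)) := by
  have hn0 : p * q * r ≠ 0 := by
    simp [hp.ne_zero, hq.ne_zero, hr.ne_zero]
  have hu0 : u ≠ 0 := ne_zero_of_dvd_ne_zero hn0 hu
  have hv0 : v ≠ 0 := ne_zero_of_dvd_ne_zero hn0 hv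
  constructor
  · exact fun h => ⟨fun h' => h'.trans h, fun h' => h'.trans h, fun h' => h'.trans h⟩
  · rintro ⟨h1, h2, h3⟩
    rw [← Nat.factorization_le_iff_dvd hu0 hv0]
    intro s
    by_cases hs : s.Prime
    · by_cases hsu : s ∣ u
      · have hsn : s ∣ p * q * r := hsu.trans hu
        have hsv : s ∣ v := by
          rcases hs.dvd_mul.mp hsn with h | h
          · rcases hs.dvd_mul.mp h with h | h
            · have := (Nat.prime_dvd_prime_iff_eq hs hp).mp h; subst this; exact h1 hsu
            · have := (Nat.prime_dvd_prime_iff_eq hs hq).mp h; subst this; exact h2 hsu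
          · have := (Nat.prime_dvd_prime_iff_eq hs hr).mp h; subst this; exact h3 hsu
        calc u.factorization s ≤ 1 := fact_n_le hp hq hr hpq hpr hqr hu s
          _ ≤ v.factorization s :=
            (Nat.Prime.dvd_iff_one_le_factorization hs hv0).mp hsv
      · simp [Nat.factorization_eq_zero_of_not_dvd hsu]
    · simp [Nat.factorization_eq_zero_of_not_prime _ hs]

def prodOf (p q r : ℕ) (a b c : Bool) : ℕ :=
  (bif a then p else 1) * (bif b then q else 1) * (bif c then r else 1)

lemma prodOf_dvd (a b c : Bool) : prodOf p q r a b c ∣ p * q * r := by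
  have h : ∀ (x : Bool) (k : ℕ), (bif x then k else 1) ∣ k := by
    intro x k; cases x <;> simp
  exact mul_dvd_mul (mul_dvd_mul (h a p) (h b q)) (h c r)

include hp hq hr hpq hpr hqr in
lemma p_dvd_prodOf (a b c : Bool) : p ∣ prodOf p q r a b c ↔ a = true := by
  have h1 : ¬ p ∣ q := fun h => hpq ((Nat.prime_dvd_prime_iff_eq hp hq).mp h)
  have h2 : ¬ p ∣ r := fun h => hpr ((Nat.prime_dvd_prime_iff_eq hp hr).mp h)
  have h3 : ¬ p ∣ 1 := fun h => hp.ne_one (Nat.dvd_one.mp h)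
  cases a <;> cases b <;> cases c <;>
    simp_all [prodOf, hp.dvd_mul, dvd_mul_of_dvd_left, dvd_mul_of_dvd_right]

include hp hq hr hpq hpr hqr in
lemma q_dvd_prodOf (a b c : Bool) : q ∣ prodOf p q r a b c ↔ b = true := by
  have h1 : ¬ q ∣ p := fun h => hpq ((Nat.prime_dvd_prime_iff_eq hq hp).mp h).symm
  have h2 : ¬ q ∣ r := fun h => hqr ((Nat.prime_dvd_prime_iff_eq hq hr).mp h)
  have h3 : ¬ q ∣ 1 := fun h => hq.ne_one (Nat.dvd_one.mp h)
  cases a <;> cases b <;> cases c <;>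
    simp_all [prodOf, hq.dvd_mul, dvd_mul_of_dvd_left, dvd_mul_of_dvd_right]

include hp hq hr hpq hpr hqr in
lemma r_dvd_prodOf (a b c : Bool) : r ∣ prodOf p q r a b c ↔ c = true := by
  have h1 : ¬ r ∣ p := fun h => hpr ((Nat.prime_dvd_prime_iff_eq hr hp).mp h).symm
  have h2 : ¬ r ∣ q := fun h => hqr ((Nat.prime_dvd_prime_iff_eq hr hq).mp h).symm
  have h3 : ¬ r ∣ 1 := fun h => hr.ne_one (Nat.dvd_one.mp h)
  cases a <;> cases b <;> cases c <;>
    simp_all [prodOf, hr.dvd_mul, dvd_mul_of_dvd_left, dvd_mul_of_dvd_right]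

end Aux

lemma decide_le_decide_iff {P Q : Prop} [Decidable P] [Decidable Q] :
    (decide P ≤ decide Q) ↔ (P → Q) := by
  by_cases hP : P <;> by_cases hQ : Q <;> simp [hP, hQ]

def cubeG : SimpleGraph (Bool × Bool × Bool) where
  Adj u v := u ≠ v ∧ (((u.1 ≤ v.1) ∧ (u.2.1 ≤ v.2.1) ∧ (u.2.2 ≤ v.2.2)) ∨
      ((v.1 ≤ u.1) ∧ (v.2.1 ≤ u.2.1) ∧ (v.2.2 ≤ u.2.2)))
  symm := ⟨fun _ _ ⟨h, hd⟩ => ⟨h.symm, hd.symm⟩⟩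
  loopless := ⟨fun _ ⟨h, _⟩ => h rfl⟩

instance : DecidableRel cubeG.Adj := fun u v => inferInstanceAs (Decidable (u ≠ v ∧ (((u.1 ≤ v.1) ∧ (u.2.1 ≤ v.2.1) ∧ (u.2.2 ≤ v.2.2)) ∨
    ((v.1 ≤ u.1) ∧ (v.2.1 ≤ u.2.1) ∧ (v.2.2 ≤ u.2.2)))))

section Iso

variable {p q r : ℕ} (hp : p.Prime) (hq : q.Prime) (hr : r.Prime)
    (hpq : p ≠ q) (hpr : p ≠ r) (hqr : q ≠ r)

def divIso : divisorGraph (p * q * r) ≃g cubeG where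
  toFun d := (decide (p ∣ d.1), decide (q ∣ d.1), decide (r ∣ d.1))
  invFun x := ⟨prodOf p q r x.1 x.2.1 x.2.2, Nat.mem_divisors.mpr
    ⟨prodOf_dvd x.1 x.2.1 x.2.2, by simp [hp.ne_zero, hq.ne_zero, hr.ne_zero]⟩⟩
  left_inv := by
    rintro ⟨d, hd⟩
    have hd' : d ∣ p * q * r := (Nat.mem_divisors.mp hd).1
    refine Subtype.ext ?_
    refine Nat.dvd_antisymm ?_ ?_
    · rw [dvd_char hp hq hr hpq hpr hqr (prodOf_dvd _ _ _) hd']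
      refine ⟨?_, ?_, ?_⟩ <;> intro h
      · simpa using (p_dvd_prodOf hp hq hr hpq hpr hqr _ _ _).mp h
      · simpa using (q_dvd_prodOf hp hq hr hpq hpr hqr _ _ _).mp h
      · simpa using (r_dvd_prodOf hp hq hr hpq hpr hqr _ _ _).mp h
    · rw [dvd_char hp hq hr hpq hpr hqr hd' (prodOf_dvd _ _ _)]
      refine ⟨?_, ?_, ?_⟩ <;> intro h
      · exact (p_dvd_prodOf hp hq hr hpq hpr hqr _ _ _).mpr (by simpa using h)
      · exact (q_dvd_prodOf hp hq hr hpq hpr hqr _ _ _).mpr (by simpa using h)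
      · exact (r_dvd_prodOf hp hq hr hpq hpr hqr _ _ _).mpr (by simpa using h)
  right_inv := by
    rintro ⟨a, b, c⟩
    simp only [Prod.mk.injEq]
    refine ⟨?_, ?_, ?_⟩
    · simp [p_dvd_prodOf hp hq hr hpq hpr hqr]
    · simp [q_dvd_prodOf hp hq hr hpq hpr hqr]
    · simp [r_dvd_prodOf hp hq hr hpq hpr hqr]
  map_rel_iff' := by
    rintro ⟨u, hu⟩ ⟨v, hv⟩
    have hu' : u ∣ p * q * r := (Nat.mem_divisors.mp hu).1
    have hv' : v ∣ p * q * r := (Nat.mem_divisors.mp hv).1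
    show (_ ≠ _ ∧ _) ↔ (_ ≠ _ ∧ _)
    simp only [Equiv.coe_fn_mk]
    constructor
    · rintro ⟨hne, h⟩
      refine ⟨fun hh => hne (by have huv : u = v := Subtype.mk_eq_mk.mp hh; subst huv; rfl), ?_⟩
      rcases h with ⟨h1, h2, h3⟩ | ⟨h1, h2, h3⟩
      · exact Or.inl ((dvd_char hp hq hr hpq hpr hqr hu' hv').mpr
          ⟨decide_le_decide_iff.mp h1, decide_le_decide_iff.mp h2, decide_le_decide_iff.mp h3⟩)
      · exact Or.inr ((dvd_char hp hq hr hpq hpr hqr hv' hu').mpr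
          ⟨decide_le_decide_iff.mp h1, decide_le_decide_iff.mp h2, decide_le_decide_iff.mp h3⟩)
    · rintro ⟨hne, h⟩
      constructor
      · intro hh
        rw [Prod.ext_iff, Prod.ext_iff] at hh
        simp only [decide_eq_decide] at hh
        exact hne (Subtype.ext (Nat.dvd_antisymm
          ((dvd_char hp hq hr hpq hpr hqr hu' hv').mpr
            ⟨hh.1.mp, hh.2.1.mp, hh.2.2.mp⟩)
          ((dvd_char hp hq hr hpq hpr hqr hv' hu').mpr
            ⟨hh.1.mpr, hh.2.1.mpr, hh.2.2.mpr⟩)))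
      · rcases h with h | h
        · have := (dvd_char hp hq hr hpq hpr hqr hu' hv').mp h
          exact Or.inl ⟨decide_le_decide_iff.mpr this.1, decide_le_decide_iff.mpr this.2.1,
            decide_le_decide_iff.mpr this.2.2⟩
        · have := (dvd_char hp hq hr hpq hpr hqr hv' hu').mp h
          exact Or.inr ⟨decide_le_decide_iff.mpr this.1, decide_le_decide_iff.mpr this.2.1,
            decide_le_decide_iff.mpr this.2.2⟩

end Iso

def cubeEdges : List (Sym2 (Bool × Bool × Bool)) :=
  [s((false,false,false),(true,false,false)), s((false,false,false),(false,true,false)),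
   s((false,false,false),(false,false,true)), s((false,false,false),(true,true,false)),
   s((false,false,false),(true,false,true)), s((false,false,false),(false,true,true)),
   s((false,false,false),(true,true,true)),
   s((true,true,true),(true,false,false)), s((true,true,true),(false,true,false)),
   s((true,true,true),(false,false,true)), s((true,true,true),(true,true,false)),
   s((true,true,true),(true,false,true)), s((true,true,true),(false,true,true)),
   s((true,false,false),(true,true,false)), s((true,false,false),(true,false,true)),
   s((false,true,false),(true,true,false)), s((false,true,false),(false,true,true)),
   s((false,false,true),(true,false,true)), s((false,false,true),(false,true,true))]

lemma cubeEdges_nodup : cubeEdges.Nodup := by decide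

lemma cube_edgeFinset : cubeG.edgeFinset = cubeEdges.toFinset := by decide

lemma cube_sum : ∑ e ∈ cubeG.edgeFinset,
    Sym2.lift ⟨fun u v =>
        (1 : ℝ) / Real.sqrt ((cubeG.degree u : ℝ) * (cubeG.degree v : ℝ)),
      fun u v => by beta_reduce; rw [mul_comm ((cubeG.degree u : ℝ))]⟩ e =
    (23 + 12 * Real.sqrt 7) / 14 := by
  have d000 : cubeG.degree (false,false,false) = 7 := by decide
  have d111 : cubeG.degree (true,true,true) = 7 := by decide
  have d100 : cubeG.degree (true,false,false) = 4 := by decide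
  have d010 : cubeG.degree (false,true,false) = 4 := by decide
  have d001 : cubeG.degree (false,false,true) = 4 := by decide
  have d110 : cubeG.degree (true,true,false) = 4 := by decide
  have d101 : cubeG.degree (true,false,true) = 4 := by decide
  have d011 : cubeG.degree (false,true,true) = 4 := by decide
  rw [cube_edgeFinset, List.sum_toFinset _ cubeEdges_nodup]
  simp only [cubeEdges, List.map_cons, List.map_nil, List.sum_cons, List.sum_nil,
    Sym2.lift_mk, d000, d111, d100, d010, d001, d110, d101, d011]
  have h49 : Real.sqrt ((7:ℕ) * (7:ℕ) : ℝ) = 7 := by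
    rw [show (((7:ℕ):ℝ) * ((7:ℕ):ℝ)) = 7^2 by norm_num, Real.sqrt_sq (by norm_num)]
  have h28 : Real.sqrt ((7:ℕ) * (4:ℕ) : ℝ) = 2 * Real.sqrt 7 := by
    rw [show (((7:ℕ):ℝ) * ((4:ℕ):ℝ)) = 2^2 * 7 by norm_num, Real.sqrt_mul (by positivity),
      Real.sqrt_sq (by norm_num)]
  have h16 : Real.sqrt ((4:ℕ) * (4:ℕ) : ℝ) = 4 := by
    rw [show (((4:ℕ):ℝ) * ((4:ℕ):ℝ)) = 4^2 by norm_num, Real.sqrt_sq (by norm_num)]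
  rw [h49, h28, h16]
  have h7 : Real.sqrt 7 > 0 := Real.sqrt_pos.mpr (by norm_num)
  have h7' : Real.sqrt 7 * Real.sqrt 7 = 7 := Real.mul_self_sqrt (by norm_num)
  field_simp
  ring_nf
  nlinarith [h7, h7']

/-- The Randić index of `Γ₃`: the sum over all edges of `1 / √(deg u · deg v)`. -/
theorem stmt_15 (p q r : ℕ) (hp : p.Prime) (hq : q.Prime) (hr : r.Prime)
    (hpq : p ≠ q) (hpr : p ≠ r) (hqr : q ≠ r) (n : ℕ) (hn : n = p * q * r) :
    ∑ e ∈ (divisorGraph n).edgeFinset,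
      Sym2.lift ⟨fun u v =>
          (1 : ℝ) / Real.sqrt (((divisorGraph n).degree u : ℝ) * ((divisorGraph n).degree v : ℝ)),
        fun u v => by beta_reduce; rw [mul_comm (((divisorGraph n).degree u : ℝ))]⟩ e =
      (23 + 12 * Real.sqrt 7) / 14 := by
  subst hn
  let φ : divisorGraph (p * q * r) ≃g cubeG := divIso hp hq hr hpq hpr hqr
  have hdeg : ∀ u, (divisorGraph (p * q * r)).degree u = cubeG.degree (φ u) := by
    intro u
    rw [← SimpleGraph.card_neighborSet_eq_degree, ← SimpleGraph.card_neighborSet_eq_degree]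
    exact Fintype.card_congr (φ.mapNeighborSet u)
  rw [← cube_sum]
  refine Finset.sum_nbij' (Sym2.map φ) (Sym2.map φ.symm) ?_ ?_ ?_ ?_ ?_
  · intro e he
    rw [SimpleGraph.mem_edgeFinset] at he ⊢
    induction e with
    | _ u v =>
      rw [Sym2.map_pair_eq, SimpleGraph.mem_edgeSet] at *
      exact φ.map_rel_iff.mpr he
  · intro e he
    rw [SimpleGraph.mem_edgeFinset] at he ⊢
    induction e with
    | _ u v =>
      rw [Sym2.map_pair_eq, SimpleGraph.mem_edgeSet] at *
      exact φ.symm.map_rel_iff.mpr (by simpa using he)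
  · intro e _
    induction e with
    | _ u v => simp [Sym2.map_pair_eq]
  · intro e _
    induction e with
    | _ u v => simp [Sym2.map_pair_eq]
  · intro e _
    induction e with
    | _ u v =>
      rw [Sym2.map_pair_eq, Sym2.lift_mk, Sym2.lift_mk]
      dsimp only
      rw [hdeg u, hdeg v]
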